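/- For every positive integer m and every radius r with mr ≤ K, the Hamming-ball volume satisfies log Vol(m·r, K) ≤ m · log Vol(r, K); equivalently, Vol(m·r, K) ≤ Vol(r, K)^m. -/

import Mathlib

/-- Volume of the Hamming ball of radius r in {0,1}^K. -/
def Vol (r K : ℕ) : ℕ := ∑ j ∈ Finset.range (r + 1), K.choose j

lemma choose_add_le_mul (K i j : ℕ) : K.choose (i + j) ≤ K.choose i * K.choose j := by
  rcases le_or_gt (i + j) K with hK | hK
  · calc K.choose (i + j) ≤ K.choose (i + j) * (i + j).choose i := by
          exact Nat.le_mul_of_pos_right _ (Nat.choose_pos (Nat.le_add_right i j))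
    _ = K.choose i * (K - i).choose j := by
          have h2 := Nat.choose_mul (n := K) (Nat.le_add_right i j)
          rwa [Nat.add_sub_cancel_left] at h2
    _ ≤ K.choose i * K.choose j := by
          exact Nat.mul_le_mul_left _ (Nat.choose_le_choose _ (Nat.sub_le K i))
  · rw [Nat.choose_eq_zero_of_lt hK]
    exact Nat.zero_le _

lemma vol_add_le (a b K : ℕ) : Vol (a + b) K ≤ Vol a K * Vol b K := by
  classical
  unfold Vol
  set f : ℕ → ℕ × ℕ := fun s => (min s a, s - min s a) with hf
  have hinj : Set.InjOn f (Finset.range (a + b + 1)) := by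
    intro x _ y _ hxy
    have h1 : min x a = min y a := congrArg Prod.fst hxy
    have h2 : x - min x a = y - min y a := congrArg Prod.snd hxy
    omega
  calc ∑ s ∈ Finset.range (a + b + 1), K.choose s
      ≤ ∑ s ∈ Finset.range (a + b + 1), K.choose (f s).1 * K.choose (f s).2 := by
        apply Finset.sum_le_sum
        intro s _
        have hfs : (f s).1 + (f s).2 = s := Nat.add_sub_cancel' (min_le_left s a)
        calc K.choose s = K.choose ((f s).1 + (f s).2) := by rw [hfs]
          _ ≤ _ := choose_add_le_mul K _ _
    _ = ∑ p ∈ (Finset.range (a + b + 1)).image f, K.choose p.1 * K.choose p.2 := by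
        rw [Finset.sum_image]
        intro x hx y hy hxy
        exact hinj (Finset.mem_coe.mpr hx) (Finset.mem_coe.mpr hy) hxy
    _ ≤ ∑ p ∈ Finset.range (a + 1) ×ˢ Finset.range (b + 1), K.choose p.1 * K.choose p.2 := by
        apply Finset.sum_le_sum_of_subset
        intro p hp
        simp only [Finset.mem_image, Finset.mem_range] at hp
        obtain ⟨s, hs, rfl⟩ := hp
        simp only [Finset.mem_product, Finset.mem_range, hf]
        omega
    _ = (∑ i ∈ Finset.range (a + 1), K.choose i) * ∑ j ∈ Finset.range (b + 1), K.choose j := by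
        rw [Finset.sum_mul_sum, ← Finset.sum_product']

lemma vol_pos (r K : ℕ) : 0 < Vol r K := by
  unfold Vol
  refine Finset.sum_pos' (fun i _ => Nat.zero_le _) ⟨0, by simp⟩

lemma vol_mul_le (m r K : ℕ) : Vol (m * r) K ≤ Vol r K ^ m := by
  induction m with
  | zero => simpa [Vol] using vol_pos 0 K
  | succ n ih =>
    calc Vol ((n + 1) * r) K = Vol (n * r + r) K := by ring_nf
      _ ≤ Vol (n * r) K * Vol r K := vol_add_le _ _ _
      _ ≤ Vol r K ^ n * Vol r K := Nat.mul_le_mul_right _ ih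
      _ = Vol r K ^ (n + 1) := by ring

/-- Submultiplicativity of Hamming ball volumes: for m ≥ 1 and m·r ≤ K,
Vol(m·r, K) ≤ Vol(r, K)^m, equivalently log Vol(m·r, K) ≤ m·log Vol(r, K). -/
theorem vol_scale_submul (m r K : ℕ) (hm : 1 ≤ m) (h : m * r ≤ K) :
    Vol (m * r) K ≤ Vol r K ^ m ∧
      Real.logb 2 (Vol (m * r) K) ≤ m * Real.logb 2 (Vol r K) := by
  have key := vol_mul_le m r K
  refine ⟨key, ?_⟩
  have hpos : (0 : ℝ) < Vol (m * r) K := by exact_mod_cast vol_pos _ _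
  have hcast : ((Vol (m * r) K : ℝ)) ≤ (Vol r K : ℝ) ^ m := by exact_mod_cast key
  calc Real.logb 2 (Vol (m * r) K) ≤ Real.logb 2 ((Vol r K : ℝ) ^ m) :=
        (Real.logb_le_logb (by norm_num) hpos (pow_pos (by exact_mod_cast vol_pos r K) m)).mpr hcast
    _ = m * Real.logb 2 (Vol r K) := by rw [Real.logb_pow]
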